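/- There exists a Hilbert C*-module X over a commutative C*-algebra B and two orthogonally complemented closed submodules M, N ⊆ X such that M ∩ N is not orthogonally complemented in X. -/

import Mathlib

/-- The class `CStarModule` as it stood in Mathlib of December 2024 (right action of `Aᵐᵒᵖ`,
inner product `A`-linear on the right); Mathlib's current `CStarModule` uses a left action. -/
class CStarModuleOld (A E : Type*) [NonUnitalSemiring A] [StarRing A]
    [Module ℂ A] [AddCommGroup E] [Module ℂ E] [PartialOrder A] [SMul Aᵐᵒᵖ E] [Norm A] [Norm E]
    extends Inner A E where
  inner_add_right {x} {y} {z} : inner x (y + z) = inner x y + inner x z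
  inner_self_nonneg {x} : 0 ≤ inner x x
  inner_self {x} : inner x x = 0 ↔ x = 0
  inner_op_smul_right {a : A} {x y : E} : inner x (MulOpposite.op a • y) = inner x y * a
  inner_smul_right_complex {z : ℂ} {x} {y} : inner x (z • y) = z • inner x y
  star_inner x y : star (inner x y) = inner y x
  norm_eq_sqrt_norm_inner_self x : ‖x‖ = √‖inner x x‖

/-- A subset `K` of a Hilbert C*-module `X` over `B` is a (closed) submodule if it is
topologically closed, contains `0`, and is stable under addition, complex scalar
multiplication and the right `B`-action. -/
def IsClosedSubmodule {B X : Type} [NonUnitalSemiring B] [StarRing B] [Module ℂ B]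
    [NormedAddCommGroup X] [Module ℂ X] [PartialOrder B] [SMul Bᵐᵒᵖ X] [Norm B]
    [CStarModuleOld B X] (K : Set X) : Prop :=
  IsClosed K ∧ (0 : X) ∈ K ∧ (∀ a ∈ K, ∀ b ∈ K, a + b ∈ K) ∧
    (∀ (c : ℂ), ∀ a ∈ K, c • a ∈ K) ∧ (∀ (b : Bᵐᵒᵖ), ∀ a ∈ K, b • a ∈ K)

/-- A subset `K` of a Hilbert C*-module `X` over `B` is orthogonally complemented if
`X = K + K^⊥`, i.e. every element splits as a sum of an element of `K` and an element
orthogonal to `K`. -/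
def IsOrthoComplemented {B X : Type} [NonUnitalSemiring B] [StarRing B] [Module ℂ B]
    [NormedAddCommGroup X] [Module ℂ X] [PartialOrder B] [SMul Bᵐᵒᵖ X] [Norm B]
    [CStarModuleOld B X] (K : Set X) : Prop :=
  ∀ x : X, ∃ k ∈ K, ∃ p : X, (∀ m ∈ K, (inner B p m : B) = 0) ∧ x = k + p

open scoped ComplexOrder
open WithCStarModule Filter Topology

set_option synthInstance.maxHeartbeats 1000000
set_option maxHeartbeats 1000000

noncomputable section CE

/-- The interval `[-1, 1]`. -/
abbrev CEI : Type := Set.Icc (-1:ℝ) 1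
/-- The C*-algebra `C([-1,1], ℂ)`. -/
abbrev CEB : Type := C(CEI, ℂ)
/-- The Hilbert C*-module `CEB ⊕ CEB` over `CEB`. -/
abbrev CEX : Type := C⋆ᵐᵒᵈ(CEB, CEB × CEB)

/-- First coordinate. -/
def ce1 (x : CEX) : CEB := (WithCStarModule.equiv CEB (CEB × CEB) x).1
/-- Second coordinate. -/
def ce2 (x : CEX) : CEB := (WithCStarModule.equiv CEB (CEB × CEB) x).2
/-- Build an element of `CEX` from its coordinates. -/
def cemk (a b : CEB) : CEX := (WithCStarModule.equiv CEB (CEB × CEB)).symm (a, b)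

lemma ce_ext {x y : CEX} (h1 : ce1 x = ce1 y) (h2 : ce2 x = ce2 y) : x = y :=
  (WithCStarModule.equiv CEB (CEB × CEB)).injective (Prod.ext h1 h2)

lemma ce1_mk (a b : CEB) : ce1 (cemk a b) = a := rfl
lemma ce2_mk (a b : CEB) : ce2 (cemk a b) = b := rfl
lemma ce1_add (x y : CEX) : ce1 (x + y) = ce1 x + ce1 y := rfl
lemma ce2_add (x y : CEX) : ce2 (x + y) = ce2 x + ce2 y := rfl
lemma ce1_zero : ce1 (0 : CEX) = 0 := rfl
lemma ce2_zero : ce2 (0 : CEX) = 0 := rfl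
lemma ce1_smul (c : ℂ) (x : CEX) : ce1 (c • x) = c • ce1 x := rfl
lemma ce2_smul (c : ℂ) (x : CEX) : ce2 (c • x) = c • ce2 x := rfl
lemma ce1_opsmul (b : CEB) (x : CEX) : ce1 (MulOpposite.op b • x) = ce1 x * b := rfl
lemma ce2_opsmul (b : CEB) (x : CEX) : ce2 (MulOpposite.op b • x) = ce2 x * b := rfl
instance : CStarModuleOld CEB CEX where
  toInner := inferInstance
  inner_add_right := CStarModule.inner_add_right
  inner_self_nonneg := CStarModule.inner_self_nonneg
  inner_self := CStarModule.inner_self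
  inner_op_smul_right {a x y} := by
    change (y.1 * a) * star x.1 + (y.2 * a) * star x.2 = (y.1 * star x.1 + y.2 * star x.2) * a
    ring
  inner_smul_right_complex := CStarModule.inner_smul_right_complex
  star_inner := CStarModule.star_inner
  norm_eq_sqrt_norm_inner_self := CStarModule.norm_eq_sqrt_norm_inner_self

lemma ce_inner (x y : CEX) : (inner CEB x y : CEB) = star (ce1 x) * ce1 y + star (ce2 x) * ce2 y := by
  change ce1 y * star (ce1 x) + ce2 y * star (ce2 x) = _
  ring

lemma ce1_cont : Continuous ce1 := continuous_fst.comp WithCStarModule.uniformEquiv.continuous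
lemma ce2_cont : Continuous ce2 := continuous_snd.comp WithCStarModule.uniformEquiv.continuous

/-- `t ↦ cos (max t 0)`. -/
def ceu1 : CEB := ⟨fun t => (Real.cos (max t.1 0) : ℂ), by fun_prop⟩
/-- `t ↦ sin (max t 0)`. -/
def ceu2 : CEB := ⟨fun t => (Real.sin (max t.1 0) : ℂ), by fun_prop⟩

lemma star_ceu1 : star ceu1 = ceu1 := by
  ext t
  simp only [ContinuousMap.star_apply, ceu1, ContinuousMap.coe_mk, Complex.star_def,
    Complex.conj_ofReal]

lemma star_ceu2 : star ceu2 = ceu2 := by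
  ext t
  simp only [ContinuousMap.star_apply, ceu2, ContinuousMap.coe_mk, Complex.star_def,
    Complex.conj_ofReal]

lemma ceu_sq : ceu1 * ceu1 + ceu2 * ceu2 = 1 := by
  ext t
  simp only [ContinuousMap.mul_apply, ContinuousMap.add_apply, ContinuousMap.one_apply, ceu1, ceu2,
    ContinuousMap.coe_mk]
  norm_cast
  linear_combination Real.cos_sq_add_sin_sq (max t.1 0)

/-- The submodule `M = {(f, 0)}`. -/
def ceM : Set CEX := {x | ce2 x = 0}
/-- The submodule `N = {b • (cos(max t 0), sin(max t 0))}` described by the relation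
`u₂ x₁ = u₁ x₂`. -/
def ceN : Set CEX := {x | ceu2 * ce1 x = ceu1 * ce2 x}

lemma ceM_closedSubmodule : IsClosedSubmodule (B := CEB) ceM := by
  refine ⟨isClosed_eq ce2_cont continuous_const, ce2_zero, ?_, ?_, ?_⟩
  · intro a ha b hb
    simp only [ceM, Set.mem_setOf_eq] at *
    rw [ce2_add, ha, hb, add_zero]
  · intro c a ha
    simp only [ceM, Set.mem_setOf_eq] at *
    rw [ce2_smul, ha]
    ext t
    simp [ContinuousMap.smul_apply]
  · intro b a ha
    simp only [ceM, Set.mem_setOf_eq] at *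
    rw [← MulOpposite.op_unop b, ce2_opsmul, ha, zero_mul]

lemma ceN_closedSubmodule : IsClosedSubmodule (B := CEB) ceN := by
  refine ⟨isClosed_eq (continuous_const.mul ce1_cont) (continuous_const.mul ce2_cont), ?_, ?_, ?_,
    ?_⟩
  · show ceu2 * ce1 0 = ceu1 * ce2 0
    rw [ce1_zero, ce2_zero, mul_zero, mul_zero]
  · intro a ha b hb
    simp only [ceN, Set.mem_setOf_eq] at *
    rw [ce1_add, ce2_add, mul_add, mul_add, ha, hb]
  · intro c a ha
    simp only [ceN, Set.mem_setOf_eq] at *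
    rw [ce1_smul, ce2_smul, mul_smul_comm, mul_smul_comm, ha]
  · intro b a ha
    simp only [ceN, Set.mem_setOf_eq] at *
    rw [← MulOpposite.op_unop b, ce1_opsmul, ce2_opsmul, ← mul_assoc, ← mul_assoc, ha]

lemma ceM_ortho : IsOrthoComplemented (B := CEB) ceM := by
  intro x
  refine ⟨cemk (ce1 x) 0, ?_, cemk 0 (ce2 x), ?_, ?_⟩
  · show ce2 (cemk (ce1 x) 0) = 0
    rw [ce2_mk]
  · intro m hm
    rw [ce_inner, ce1_mk, ce2_mk, hm]
    simp
  · refine ce_ext ?_ ?_ <;>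
      simp [ce1_add, ce2_add, ce1_mk, ce2_mk]

lemma ceN_ortho : IsOrthoComplemented (B := CEB) ceN := by
  intro x
  set b : CEB := ceu1 * ce1 x + ceu2 * ce2 x with hb
  refine ⟨cemk (b * ceu1) (b * ceu2), ?_, cemk (ce1 x - b * ceu1) (ce2 x - b * ceu2), ?_, ?_⟩
  · show ceu2 * (b * ceu1) = ceu1 * (b * ceu2)
    ring
  · intro m hm
    have hm' : ceu2 * ce1 m = ceu1 * ce2 m := hm
    rw [ce_inner, ce1_mk, ce2_mk]
    simp only [star_sub, star_mul, star_add, star_ceu1, star_ceu2, hb]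
    linear_combination (ceu2 * star (ce1 x) - ceu1 * star (ce2 x)) * hm' -
      (star (ce1 x) * ce1 m + star (ce2 x) * ce2 m) * ceu_sq
  · refine ce_ext ?_ ?_ <;>
      · simp only [ce1_add, ce2_add, ce1_mk, ce2_mk]
        ring

lemma ceMN_closedSubmodule : IsClosedSubmodule (B := CEB) (ceM ∩ ceN) := by
  obtain ⟨hMc, hM0, hMa, hMs, hMo⟩ := ceM_closedSubmodule
  obtain ⟨hNc, hN0, hNa, hNs, hNo⟩ := ceN_closedSubmodule
  exact ⟨hMc.inter hNc, ⟨hM0, hN0⟩,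
    fun a ha b hb => ⟨hMa a ha.1 b hb.1, hNa a ha.2 b hb.2⟩,
    fun c a ha => ⟨hMs c a ha.1, hNs c a ha.2⟩,
    fun b a ha => ⟨hMo b a ha.1, hNo b a ha.2⟩⟩

/-- The zero point of the interval. -/
def cet0 : CEI := ⟨0, by norm_num⟩

lemma ce_seq (f : CEB) (x : ℕ → CEI) (hx : Tendsto (fun n => ((x n : CEI) : ℝ)) atTop (𝓝 0))
    (hf : ∀ n, f (x n) = 0) : f cet0 = 0 := by
  have hx' : Tendsto x atTop (𝓝 cet0) := by
    rw [tendsto_subtype_rng]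
    exact hx
  have h2 : Tendsto (fun n => f (x n)) atTop (𝓝 (f cet0)) :=
    (f.continuous.tendsto _).comp hx'
  simp only [hf] at h2
  exact (tendsto_nhds_unique h2 tendsto_const_nhds)

lemma ce_mem_pos (n : ℕ) : (1:ℝ)/(n+1) ∈ Set.Icc (-1:ℝ) 1 := by
  have h0 : (0:ℝ) < 1/(n+1) := by positivity
  have h1 : (1:ℝ)/(n+1) ≤ 1 := by
    rw [div_le_one (by positivity)]
    linarith [Nat.cast_nonneg (α := ℝ) n]
  exact ⟨by linarith, h1⟩

lemma ce_mem_neg (n : ℕ) : -((1:ℝ)/(n+1)) ∈ Set.Icc (-1:ℝ) 1 := by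
  obtain ⟨h1, h2⟩ := ce_mem_pos n
  constructor <;> linarith

lemma ceMN_not_ortho : ¬ IsOrthoComplemented (B := CEB) (ceM ∩ ceN) := by
  intro h
  obtain ⟨k, hk, p, hp, hx⟩ := h (cemk 1 0)
  -- `u₂ * k₁ = 0`, hence `k₁` vanishes for positive times, hence at `0`.
  have hk2 : ce2 k = 0 := hk.1
  have hku : ceu2 * ce1 k = 0 := by
    have := hk.2
    simp only [ceN, Set.mem_setOf_eq] at this
    rw [this, hk2, mul_zero]
  have hk10 : ce1 k cet0 = 0 := by
    refine ce_seq _ (fun n => ⟨1/(n+1), ce_mem_pos n⟩) ?_ ?_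
    · exact tendsto_one_div_add_atTop_nhds_zero_nat
    · intro n
      have h0 : (0:ℝ) < 1/(n+1) := by positivity
      have h1 : (1:ℝ)/(n+1) ≤ 1 := (ce_mem_pos n).2
      have happ := congrFun (congrArg (fun f : CEB => (f : CEI → ℂ)) hku)
        ⟨1/(n+1), ce_mem_pos n⟩
      simp only [ContinuousMap.mul_apply, ContinuousMap.zero_apply] at happ
      have hsin : ceu2 ⟨1/(n+1), ce_mem_pos n⟩ ≠ 0 := by
        simp only [ceu2, ContinuousMap.coe_mk, max_eq_left h0.le]
        exact Complex.ofReal_ne_zero.mpr (ne_of_gt (Real.sin_pos_of_pos_of_lt_pi h0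
          (lt_of_le_of_lt h1 (by linarith [Real.pi_gt_three]))))
      exact (mul_eq_zero.mp happ).resolve_left hsin
  -- the test function `g(t) = max (-t) 0`, giving an element of `M ∩ N`.
  set g : CEB := ⟨fun t => ((max (-t.1) 0 : ℝ) : ℂ), by fun_prop⟩ with hg
  have hgMN : cemk g 0 ∈ ceM ∩ ceN := by
    constructor
    · show ce2 (cemk g 0) = 0
      rw [ce2_mk]
    · show ceu2 * ce1 (cemk g 0) = ceu1 * ce2 (cemk g 0)
      rw [ce1_mk, ce2_mk, mul_zero]
      ext t
      simp only [ContinuousMap.mul_apply, ContinuousMap.zero_apply, ceu2, hg,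
        ContinuousMap.coe_mk]
      rcases le_or_gt t.1 0 with ht | ht
      · rw [max_eq_right ht, Real.sin_zero]
        simp
      · rw [max_eq_right (by linarith : -t.1 ≤ 0)]
        simp
  -- `p₁` vanishes for negative times, hence at `0`.
  have hpg : star (ce1 p) * g = 0 := by
    have := hp _ hgMN
    rw [ce_inner, ce1_mk, ce2_mk, mul_zero, add_zero] at this
    exact this
  have hp10 : ce1 p cet0 = 0 := by
    refine ce_seq _ (fun n => ⟨-(1/(n+1)), ce_mem_neg n⟩) ?_ ?_
    · simpa using (tendsto_one_div_add_atTop_nhds_zero_nat (𝕜 := ℝ)).neg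
    · intro n
      have h0 : (0:ℝ) < 1/(n+1) := by positivity
      have happ := congrFun (congrArg (fun f : CEB => (f : CEI → ℂ)) hpg)
        ⟨-(1/(n+1)), ce_mem_neg n⟩
      simp only [ContinuousMap.mul_apply, ContinuousMap.zero_apply,
        ContinuousMap.star_apply, hg, ContinuousMap.coe_mk] at happ
      rw [neg_neg, max_eq_left h0.le] at happ
      have hne : (Complex.ofReal ((1:ℝ)/(n+1))) ≠ 0 := Complex.ofReal_ne_zero.mpr (ne_of_gt h0)
      have := (mul_eq_zero.mp happ).resolve_right (by exact_mod_cast hne)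
      exact star_eq_zero.mp this
  -- evaluate `1 = k₁ + p₁` at `0`.
  have h1 : (1 : CEB) = ce1 k + ce1 p := by
    have := congrArg ce1 hx
    rwa [ce1_mk, ce1_add] at this
  have := congrFun (congrArg (fun f : CEB => (f : CEI → ℂ)) h1) cet0
  simp only [ContinuousMap.one_apply, ContinuousMap.add_apply, hk10, hp10, add_zero] at this
  exact one_ne_zero this

end CE

/-- The intersection of orthogonally complemented submodules of a Hilbert C*-module need
not be orthogonally complemented. -/
theorem exists_intersection_not_complemented :
    ∃ (B : Type) (_ : CommCStarAlgebra B) (X : Type) (_ : NormedAddCommGroup X)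
      (_ : Module ℂ X) (_ : PartialOrder B) (_ : SMul Bᵐᵒᵖ X) (_ : CStarModuleOld B X)
      (_ : CompleteSpace X) (M N : Set X),
      IsClosedSubmodule (B := B) M ∧ IsClosedSubmodule (B := B) N ∧
      IsOrthoComplemented (B := B) M ∧ IsOrthoComplemented (B := B) N ∧
      IsClosedSubmodule (B := B) (M ∩ N) ∧
      ¬ IsOrthoComplemented (B := B) (M ∩ N) := by
  exact ⟨CEB, inferInstance, CEX, inferInstance, inferInstance, inferInstance, inferInstance,
    inferInstance, inferInstance, ceM, ceN, ceM_closedSubmodule, ceN_closedSubmodule,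
    ceM_ortho, ceN_ortho, ceMN_closedSubmodule, ceMN_not_ortho⟩
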